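/- Assume π is surjective and that Δ is a bounded subset of 𝔡*. Then the level set Ψ⁻¹(0) is a compact subset of ℂ^d. -/
import Mathlib


/-- Assume `π` is surjective and `Δ` is a bounded subset of `𝔡*`.
Then the level set `Ψ⁻¹(0)` is a compact subset of `ℂ^d`.
(In finite dimensions the dual `𝔡*` is realized as `𝔡 →L[ℝ] ℝ`.) -/
theorem zero_level_isCompact
    {𝔡 : Type*} [NormedAddCommGroup 𝔡] [NormedSpace ℝ 𝔡] [FiniteDimensional ℝ 𝔡]
    {d : ℕ} (X : Fin d → 𝔡) (lam : Fin d → ℝ)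
    (π : (Fin d → ℝ) →ₗ[ℝ] 𝔡) (hπ : ∀ j, π (Pi.single j 1) = X j)
    (hsurj : Function.Surjective π)
    (hbd : Bornology.IsBounded {μ : 𝔡 →L[ℝ] ℝ | ∀ j, lam j ≤ μ (X j)}) :
    IsCompact {z : Fin d → ℂ | ∀ v ∈ LinearMap.ker π,
      ∑ j, (‖z j‖ ^ 2 + lam j) * v j = 0} := by
  obtain ⟨C, hC⟩ := (isBounded_iff_forall_norm_le).1 hbd
  obtain ⟨σ, hσ⟩ := π.exists_rightInverse_of_surjective
    (LinearMap.range_eq_top.2 hsurj)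
  -- a uniform bound on coordinates
  obtain ⟨B, hB⟩ := Finite.exists_le fun j : Fin d =>
    Real.sqrt (C * ‖X j‖ + |lam j|)
  apply Metric.isCompact_of_isClosed_isBounded
  · have hset : {z : Fin d → ℂ | ∀ v ∈ LinearMap.ker π,
        ∑ j, (‖z j‖ ^ 2 + lam j) * v j = 0}
        = ⋂ v ∈ LinearMap.ker π,
          {z : Fin d → ℂ | ∑ j, (‖z j‖ ^ 2 + lam j) * v j = 0} := by
      ext z; simp [Set.mem_iInter]
    rw [hset]
    refine isClosed_biInter fun v _ => isClosed_eq ?_ continuous_const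
    exact continuous_finset_sum _ fun j _ => by fun_prop
  · apply Bornology.IsBounded.subset (Metric.isBounded_closedBall
      (x := (0 : Fin d → ℂ)) (r := max B 0))
    intro z hz
    -- build μ ∈ Δ from z
    set c : Fin d → ℝ := fun j => ‖z j‖ ^ 2 + lam j with hc
    set Lz : (Fin d → ℝ) →ₗ[ℝ] ℝ :=
      ∑ j, c j • (LinearMap.proj j : (Fin d → ℝ) →ₗ[ℝ] ℝ) with hLz
    have hLzapp : ∀ v, Lz v = ∑ j, c j * v j := by
      intro v
      simp [hLz, LinearMap.sum_apply, smul_eq_mul]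
    have hker : ∀ v ∈ LinearMap.ker π, Lz v = 0 := by
      intro v hv; rw [hLzapp]; exact hz v hv
    set μ : 𝔡 →L[ℝ] ℝ := LinearMap.toContinuousLinearMap (Lz.comp σ) with hμ
    have hμX : ∀ j, μ (X j) = c j := by
      intro j
      have h1 : σ (X j) - Pi.single j 1 ∈ LinearMap.ker π := by
        rw [LinearMap.mem_ker, map_sub, hπ j]
        have : π (σ (X j)) = X j := by
          have := congrArg (fun f => f (X j)) hσ
          simpa using this
        rw [this, sub_self]
      have h2 : Lz (σ (X j) - Pi.single j 1) = 0 := hker _ h1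
      rw [map_sub, sub_eq_zero] at h2
      have h3 : Lz (Pi.single j 1) = c j := by
        rw [hLzapp]
        simp [Pi.single_apply, Finset.sum_ite_eq', mul_comm]
      have : μ (X j) = Lz (σ (X j)) := by
        simp [hμ]
      rw [this, h2, h3]
    have hμΔ : μ ∈ {μ : 𝔡 →L[ℝ] ℝ | ∀ j, lam j ≤ μ (X j)} := by
      intro j
      rw [hμX j]
      simpa [hc] using le_add_of_nonneg_left (sq_nonneg ‖z j‖)
    have hμnorm : ‖μ‖ ≤ C := hC μ hμΔ
    -- bound each coordinate
    have hcoord : ∀ j, ‖z j‖ ≤ B := by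
      intro j
      refine le_trans ?_ (hB j)
      rw [show (Real.sqrt (C * ‖X j‖ + |lam j|)) = √(C * ‖X j‖ + |lam j|) from rfl]
      have hC0 : 0 ≤ C := le_trans (norm_nonneg μ) hμnorm
      rw [Real.le_sqrt (norm_nonneg _)
        (add_nonneg (mul_nonneg hC0 (norm_nonneg _)) (abs_nonneg _))]
      have h1 : ‖z j‖ ^ 2 = μ (X j) - lam j := by rw [hμX j, hc]; ring
      have h2 : μ (X j) ≤ C * ‖X j‖ := by
        calc μ (X j) ≤ ‖μ (X j)‖ := le_abs_self _
          _ ≤ ‖μ‖ * ‖X j‖ := μ.le_opNorm _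
          _ ≤ C * ‖X j‖ := by
              apply mul_le_mul_of_nonneg_right hμnorm (norm_nonneg _)
      have h3 : -lam j ≤ |lam j| := neg_le_abs _
      linarith
    rw [Metric.mem_closedBall, dist_zero_right]
    refine (pi_norm_le_iff_of_nonneg (le_max_right _ _)).2 fun j =>
      le_trans (hcoord j) (le_max_left _ _)
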